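/- Let A, B be positive definite matrices in M_m(C) ⊗ M_n(C) with partial traces A_1 = Tr_2(A), B_1 = Tr_2(B). Let U : M_m(C) → M_m(C) ⊗ M_n(C) be the isometry U(X) = (X A_1^{-1/2} ⊗ I_2) A^{1/2} with adjoint U*(Y) = Tr_2(Y A^{1/2} (A_1^{-1/2} ⊗ I_2)). Then U* ∘ Δ(B/A) ∘ U = Δ(B_1/A_1), where Δ(B/A)(X) = B X A^{-1}. -/

import Mathlib

open Matrix Kronecker ComplexOrder

/-- Partial trace over the second tensor factor. -/
noncomputable def ptrace2 {m n : Type*} [Fintype n] (A : Matrix (m × n) (m × n) ℂ) :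
    Matrix m m ℂ := fun i j => ∑ k, A (i, k) (j, k)

/-- The positive semidefinite square root of a positive semidefinite matrix
(the definition Mathlib had as `Matrix.PosSemidef.sqrt`, since removed). -/
noncomputable def Matrix.PosSemidef.sqrt {n : Type*} [Fintype n] [DecidableEq n] {𝕜 : Type*}
    [RCLike 𝕜] {A : Matrix n n 𝕜} (hA : A.PosSemidef) : Matrix n n 𝕜 :=
  hA.1.eigenvectorUnitary.1 * diagonal ((↑) ∘ (√·) ∘ hA.1.eigenvalues) *
    (star hA.1.eigenvectorUnitary : Matrix n n 𝕜)

lemma psd_sqrt_mul_self {k : Type*} [Fintype k] [DecidableEq k] {M : Matrix k k ℂ}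
    (hM : M.PosSemidef) : hM.sqrt * hM.sqrt = M := by
  have hU : (star hM.1.eigenvectorUnitary : Matrix k k ℂ) * hM.1.eigenvectorUnitary.1 = 1 :=
    Unitary.star_mul_self_of_mem hM.1.eigenvectorUnitary.2
  have hd : diagonal ((RCLike.ofReal ∘ (√·) ∘ hM.1.eigenvalues) : k → ℂ) *
      diagonal (RCLike.ofReal ∘ (√·) ∘ hM.1.eigenvalues) = diagonal (RCLike.ofReal ∘ hM.1.eigenvalues) := by
    rw [diagonal_mul_diagonal]
    congr 1
    funext i
    simp only [Function.comp_apply]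
    rw [← RCLike.ofReal_mul, Real.mul_self_sqrt (hM.eigenvalues_nonneg i)]
  conv_rhs => rw [hM.1.spectral_theorem]
  simp only [Matrix.PosSemidef.sqrt, Unitary.conjStarAlgAut_apply]
  calc _ = hM.1.eigenvectorUnitary.1 * diagonal ((RCLike.ofReal ∘ (√·) ∘ hM.1.eigenvalues) : k → ℂ) *
        ((star hM.1.eigenvectorUnitary : Matrix k k ℂ) * hM.1.eigenvectorUnitary.1) *
        diagonal (RCLike.ofReal ∘ (√·) ∘ hM.1.eigenvalues) * (star hM.1.eigenvectorUnitary : Matrix k k ℂ) := by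
        simp only [Matrix.mul_assoc]
    _ = _ := by rw [hU, Matrix.mul_one, ← hd]; simp only [Matrix.mul_assoc]

/-- The isometry `U : X ↦ (X A₁^{-1/2} ⊗ I₂) A^{1/2}`, where `A₁ = Tr₂ A`. -/
noncomputable def mapU {m n : ℕ} (A : Matrix (Fin m × Fin n) (Fin m × Fin n) ℂ)
    (hA : A.PosDef) (hA1 : (ptrace2 A).PosDef) (X : Matrix (Fin m) (Fin m) ℂ) :
    Matrix (Fin m × Fin n) (Fin m × Fin n) ℂ :=
  ((X * (hA1.posSemidef.sqrt)⁻¹) ⊗ₖ (1 : Matrix (Fin n) (Fin n) ℂ)) * hA.posSemidef.sqrt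

/-- The adjoint `U* : Y ↦ Tr₂(Y A^{1/2} (A₁^{-1/2} ⊗ I₂))` of the isometry `U`. -/
noncomputable def mapUadj {m n : ℕ} (A : Matrix (Fin m × Fin n) (Fin m × Fin n) ℂ)
    (hA : A.PosDef) (hA1 : (ptrace2 A).PosDef)
    (Y : Matrix (Fin m × Fin n) (Fin m × Fin n) ℂ) : Matrix (Fin m) (Fin m) ℂ :=
  ptrace2 (Y * hA.posSemidef.sqrt * (((hA1.posSemidef.sqrt)⁻¹) ⊗ₖ (1 : Matrix (Fin n) (Fin n) ℂ)))


lemma ptrace2_mul_kron {m n : ℕ} (Y : Matrix (Fin m × Fin n) (Fin m × Fin n) ℂ)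
    (C : Matrix (Fin m) (Fin m) ℂ) :
    ptrace2 (Y * (C ⊗ₖ (1 : Matrix (Fin n) (Fin n) ℂ))) = ptrace2 Y * C := by
  ext i j
  simp only [ptrace2, mul_apply, kroneckerMap_apply, Fintype.sum_prod_type, one_apply]
  rw [Finset.sum_comm]
  refine Finset.sum_congr rfl fun p _ => ?_
  simp only [mul_ite, mul_one, mul_zero, Finset.sum_ite_eq', Finset.mem_univ, if_true]
  rw [Finset.sum_mul]

lemma sqrt_isUnit {k : Type*} [Fintype k] [DecidableEq k] {M : Matrix k k ℂ} (hM : M.PosDef) :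
    IsUnit hM.posSemidef.sqrt := by
  rw [Matrix.isUnit_iff_isUnit_det, isUnit_iff_ne_zero]
  intro h
  have := psd_sqrt_mul_self hM.posSemidef
  have hdet : hM.posSemidef.sqrt.det * hM.posSemidef.sqrt.det = M.det := by
    rw [← Matrix.det_mul, this]
  rw [h, mul_zero] at hdet
  exact hM.det_pos.ne' hdet.symm

/-- The relation `U* ∘ Δ(B/A) ∘ U = Δ(B₁/A₁)`, where `Δ(B/A)(X) = B X A⁻¹`, `A₁ = Tr₂ A`,
`B₁ = Tr₂ B`. -/
theorem mapU_relative_modular {m n : ℕ}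
    (A B : Matrix (Fin m × Fin n) (Fin m × Fin n) ℂ)
    (hA : A.PosDef) (hB : B.PosDef) (hA1 : (ptrace2 A).PosDef) :
    ∀ X : Matrix (Fin m) (Fin m) ℂ,
      mapUadj A hA hA1 (B * mapU A hA hA1 X * A⁻¹) = ptrace2 B * X * (ptrace2 A)⁻¹ := by
  intro X
  set sA := hA.posSemidef.sqrt with hsA
  set s1 := hA1.posSemidef.sqrt with hs1
  have hsAu : IsUnit sA := sqrt_isUnit hA
  have key1 : sA * A⁻¹ * sA = 1 := by
    conv_lhs => rw [← psd_sqrt_mul_self hA.posSemidef]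
    have hdet : IsUnit sA.det := (Matrix.isUnit_iff_isUnit_det _).mp hsAu
    rw [Matrix.mul_inv_rev, ← hsA, ← Matrix.mul_assoc,
      Matrix.mul_nonsing_inv _ hdet, Matrix.one_mul, Matrix.nonsing_inv_mul _ hdet]
  have key2 : s1⁻¹ * s1⁻¹ = (ptrace2 A)⁻¹ := by
    conv_rhs => rw [← psd_sqrt_mul_self hA1.posSemidef]
    rw [Matrix.mul_inv_rev]
  have hE : B * mapU A hA hA1 X * A⁻¹ * sA * (s1⁻¹ ⊗ₖ (1 : Matrix (Fin n) (Fin n) ℂ))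
      = B * ((X * (ptrace2 A)⁻¹) ⊗ₖ (1 : Matrix (Fin n) (Fin n) ℂ)) := by
    unfold mapU
    rw [← hsA, ← hs1]
    calc B * (((X * s1⁻¹) ⊗ₖ (1 : Matrix (Fin n) (Fin n) ℂ)) * sA) * A⁻¹ * sA *
          (s1⁻¹ ⊗ₖ (1 : Matrix (Fin n) (Fin n) ℂ))
        = B * ((X * s1⁻¹) ⊗ₖ (1 : Matrix (Fin n) (Fin n) ℂ)) * (sA * A⁻¹ * sA) *
          (s1⁻¹ ⊗ₖ (1 : Matrix (Fin n) (Fin n) ℂ)) := by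
          simp only [Matrix.mul_assoc]
      _ = B * (((X * s1⁻¹) ⊗ₖ (1 : Matrix (Fin n) (Fin n) ℂ)) *
          (s1⁻¹ ⊗ₖ (1 : Matrix (Fin n) (Fin n) ℂ))) := by
          rw [key1, Matrix.mul_one, Matrix.mul_assoc]
      _ = B * ((X * s1⁻¹ * s1⁻¹) ⊗ₖ ((1 : Matrix (Fin n) (Fin n) ℂ) * 1)) := by
          rw [← Matrix.mul_kronecker_mul]
      _ = B * ((X * (ptrace2 A)⁻¹) ⊗ₖ (1 : Matrix (Fin n) (Fin n) ℂ)) := by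
          rw [Matrix.mul_assoc X, key2, mul_one]
  unfold mapUadj
  rw [← hsA, ← hs1, hE, ptrace2_mul_kron, ← Matrix.mul_assoc]
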